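/- Let α : ℝ → ℝ be defined by α(x) = arcsin((1-2x)/√5) + arcsin((1+2x)/√5) + 2·arctan(2) - π, and let Φ = (1 + √5)/2. Then (1/π)·∫_{-1/2}^{1/2} α(x) dx = (2/π)·(2·arctan(1/3) - 1/Φ). -/

import Mathlib

open Real

lemma hG (t : ℝ) (ht : t^2 < 1) :
    HasDerivAt (fun t : ℝ => t * Real.arcsin t + Real.sqrt (1 - t^2)) (Real.arcsin t) t := by
  have h1 : t ≠ -1 := by intro h; rw [h] at ht; norm_num at ht
  have h2 : t ≠ 1 := by intro h; rw [h] at ht; norm_num at ht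
  have hpos : 0 < 1 - t^2 := by linarith
  have hs : Real.sqrt (1 - t^2) ≠ 0 := by positivity
  have d1 : HasDerivAt (fun t : ℝ => t * Real.arcsin t)
      (1 * Real.arcsin t + t * (1 / Real.sqrt (1 - t^2))) t :=
    (hasDerivAt_id t).mul (Real.hasDerivAt_arcsin h1 h2)
  have d2 : HasDerivAt (fun t : ℝ => 1 - t^2) (-(2*t)) t := by
    have := ((hasDerivAt_pow 2 t).const_sub 1)
    simpa using this
  have d3 : HasDerivAt (fun t : ℝ => Real.sqrt (1 - t^2))
      (-(2*t) / (2 * Real.sqrt (1 - t^2))) t := d2.sqrt (by positivity)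
  have := d1.add d3
  refine this.congr_deriv ?_
  rw [mul_one_div, neg_div, mul_div_mul_left _ _ (two_ne_zero)]
  ring

theorem main_result (α : ℝ → ℝ)
    (hα : ∀ x, α x = Real.arcsin ((1 - 2*x) / Real.sqrt 5) + Real.arcsin ((1 + 2*x) / Real.sqrt 5)
        + 2 * Real.arctan 2 - Real.pi)
    (Φ : ℝ) (hΦ : Φ = (1 + Real.sqrt 5) / 2) :
    (1 / Real.pi) * ∫ x in (-(1:ℝ)/2)..(1/2), α x
      = (2 / Real.pi) * (2 * Real.arctan (1/3) - 1 / Φ) := by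
  set s := Real.sqrt 5 with hsdef
  have hs0 : (0:ℝ) < s := Real.sqrt_pos.mpr (by norm_num)
  have hs2 : s^2 = 5 := Real.sq_sqrt (by norm_num)
  have hsne : s ≠ 0 := ne_of_gt hs0
  set G : ℝ → ℝ := fun t => t * Real.arcsin t + Real.sqrt (1 - t^2) with hGdef
  set F : ℝ → ℝ := fun x =>
    (s/2) * (G ((1+2*x)/s) - G ((1-2*x)/s)) + (2 * Real.arctan 2 - Real.pi) * x with hFdef
  -- derivative
  have hderiv : ∀ x ∈ Set.uIcc (-(1:ℝ)/2) (1/2), HasDerivAt F (α x) x := by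
    intro x hx
    rw [Set.uIcc_of_le (by norm_num)] at hx
    obtain ⟨hx1, hx2⟩ := hx
    have hu2 : ((1+2*x)/s)^2 < 1 := by
      rw [div_pow, hs2, div_lt_one (by norm_num)]; nlinarith
    have hv2 : ((1-2*x)/s)^2 < 1 := by
      rw [div_pow, hs2, div_lt_one (by norm_num)]; nlinarith
    have du : HasDerivAt (fun x : ℝ => (1+2*x)/s) (2/s) x := by
      have : HasDerivAt (fun x : ℝ => (1+2*x)) 2 x := by
        simpa using ((hasDerivAt_id x).const_mul 2).const_add 1
      simpa using this.div_const s
    have dv : HasDerivAt (fun x : ℝ => (1-2*x)/s) (-2/s) x := by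
      have : HasDerivAt (fun x : ℝ => (1-2*x)) (-2) x := by
        simpa using ((hasDerivAt_id x).const_mul 2).const_sub 1
      simpa using this.div_const s
    have dGu : HasDerivAt (fun x : ℝ => G ((1+2*x)/s))
        (Real.arcsin ((1+2*x)/s) * (2/s)) x := by
        have := (hG _ hu2).comp x du; exact this
    have dGv : HasDerivAt (fun x : ℝ => G ((1-2*x)/s))
        (Real.arcsin ((1-2*x)/s) * (-2/s)) x := by
        have := (hG _ hv2).comp x dv; exact this
    have dF : HasDerivAt F
        ((s/2) * (Real.arcsin ((1+2*x)/s) * (2/s) - Real.arcsin ((1-2*x)/s) * (-2/s))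
          + (2 * Real.arctan 2 - Real.pi) * 1) x := by
      exact (((dGu.sub dGv).const_mul (s/2)).add
        (((hasDerivAt_id x).const_mul (2 * Real.arctan 2 - Real.pi))))
    convert dF using 1
    rw [hα x]
    field_simp
    ring
  have hint : IntervalIntegrable α MeasureTheory.volume (-(1:ℝ)/2) (1/2) := by
    have hc : Continuous α := by
      have : Continuous fun x : ℝ => Real.arcsin ((1 - 2*x) / s) + Real.arcsin ((1 + 2*x) / s)
          + 2 * Real.arctan 2 - Real.pi :=
        (((Real.continuous_arcsin.comp (by fun_prop)).add
          (Real.continuous_arcsin.comp (by fun_prop))).add continuous_const).sub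
          continuous_const
      exact this.congr fun x => (hα x).symm
    exact hc.intervalIntegrable _ _
  have hI : ∫ x in (-(1:ℝ)/2)..(1/2), α x = F (1/2) - F (-(1)/2) :=
    intervalIntegral.integral_eq_sub_of_hasDerivAt hderiv hint
  -- evaluate F
  have e1 : (1 + 2*((1:ℝ)/2))/s = 2/s := by ring
  have hG0 : G 0 = 1 := by simp [hGdef]
  have hsqrt15 : Real.sqrt (1 - (2/s)^2) = 1/s := by
    rw [div_pow, hs2]
    rw [show (1:ℝ) - 2^2/5 = 1/5 by norm_num]
    rw [show (1:ℝ)/5 = (1/s)^2 by rw [div_pow, hs2]; norm_num]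
    exact Real.sqrt_sq (by positivity)
  have hG2s : G (2/s) = (2/s) * Real.arcsin (2/s) + 1/s := by
    rw [hGdef]; simp [hsqrt15]
  have harcsin : Real.arcsin (2/s) = Real.arctan 2 := by
    rw [Real.arctan_eq_arcsin]
    norm_num
    rw [hsdef]
  have harctan : Real.arctan 2 = Real.pi/4 + Real.arctan (1/3) := by
    have h := Real.arctan_add (x := (1:ℝ)/3) (y := 1) (by norm_num)
    rw [Real.arctan_one] at h
    norm_num at h
    linarith
  have hFval : F (1/2) - F (-(1)/2) = 4 * Real.arctan (1/3) + 1 - s := by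
    have : F (1/2) - F (-(1)/2)
        = (s/2) * (G (2/s) - G 0) + (2 * Real.arctan 2 - Real.pi) * (1/2)
          - ((s/2) * (G 0 - G (2/s)) + (2 * Real.arctan 2 - Real.pi) * (-(1)/2)) := by
      rw [hFdef]
      norm_num
    rw [this, hG2s, hG0, harcsin, harctan]
    field_simp
    ring
  rw [hI, hFval, hΦ]
  have hΦne : (1 + s) ≠ 0 := by positivity
  have hπ : Real.pi ≠ 0 := Real.pi_ne_zero
  have hinv : 1 / ((1 + s)/2) = (s - 1)/2 := by
    field_simp
    nlinarith
  rw [hinv]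
  field_simp
  ring
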